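/- arXiv:1909.09314 — 4 statements merged into one kernel-verified Lean document; each statement's English description precedes it below -/
import Mathlib

section
/- Let S and A be finite nonempty types, T ≥ 1 a horizon, g : S → A → S a deterministic transition function, and f : S → A → ℝ a reward function. Define soft value functions backward by V_{T+1}(s) = 0, Q_t(s,a) = f(s,a) + V_{t+1}(g(s,a)), and V_t(s) = log ∑_{a∈A} exp(Q_t(s,a)) for t = T, T−1, …, 1, and the softmax policy π_t(a|s) = exp(Q_t(s,a) − V_t(s)). Then for every initial state s₁ ∈ S and every action sequence a₁, …, a_T ∈ A, with induced states s_{t+1} = g(s_t, a_t), one has ∏_{t=1}^T π_t(a_t|s_t) = exp( ∑_{t=1}^T f(s_t, a_t) − V₁(s₁) ). -/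
open BigOperators

/-- In a finite-horizon deterministic MDP, with soft value functions defined
backward by `V_{T+1} = 0`, `Q_t(s,a) = f(s,a) + V_{t+1}(g(s,a))`,
`V_t(s) = log ∑_a exp (Q_t(s,a))`, and softmax policy
`π_t(a|s) = exp (Q_t(s,a) − V_t(s))`, the probability of any action sequence
along its induced trajectory telescopes:
`∏_{t=1}^T π_t(a_t|s_t) = exp (∑_{t=1}^T f(s_t,a_t) − V₁(s₁))`. -/
theorem softmax_policy_traj_prob {S A : Type*}
    [Fintype S] [Fintype A] [Nonempty S] [Nonempty A]
    (T : ℕ) (hT : 1 ≤ T) (g : S → A → S) (f : S → A → ℝ)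
    (V : ℕ → S → ℝ) (Q : ℕ → S → A → ℝ) (π : ℕ → S → A → ℝ)
    (hVend : ∀ s, V (T + 1) s = 0)
    (hQ : ∀ t, 1 ≤ t → t ≤ T → ∀ s a, Q t s a = f s a + V (t + 1) (g s a))
    (hV : ∀ t, 1 ≤ t → t ≤ T → ∀ s, V t s = Real.log (∑ a, Real.exp (Q t s a)))
    (hπ : ∀ t, 1 ≤ t → t ≤ T → ∀ s a, π t s a = Real.exp (Q t s a - V t s))
    (s : ℕ → S) (a : ℕ → A)
    (hs : ∀ t, 1 ≤ t → t ≤ T → s (t + 1) = g (s t) (a t)) :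
    ∏ t ∈ Finset.Icc 1 T, π t (s t) (a t)
      = Real.exp ((∑ t ∈ Finset.Icc 1 T, f (s t) (a t)) - V 1 (s 1)) := by
  have key : ∀ n, 1 ≤ n → n ≤ T →
      ∏ t ∈ Finset.Icc 1 n, π t (s t) (a t)
        = Real.exp ((∑ t ∈ Finset.Icc 1 n, f (s t) (a t))
            + V (n + 1) (s (n + 1)) - V 1 (s 1)) := by
    intro n
    induction n with
    | zero => intro h; omega
    | succ m ih =>
      intro _ hle
      rcases Nat.eq_zero_or_pos m with hm | hm
      · subst hm
        simp only [Finset.Icc_self, Finset.prod_singleton, Finset.sum_singleton]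
        rw [hπ 1 le_rfl hle, hQ 1 le_rfl hle, hs 1 le_rfl hle]
      · have hmT : m ≤ T := le_trans (Nat.le_succ m) hle
        rw [Finset.prod_Icc_succ_top (by omega), Finset.sum_Icc_succ_top (by omega),
          ih hm hmT, hπ (m + 1) (by omega) hle, hQ (m + 1) (by omega) hle,
          hs (m + 1) (by omega) hle, ← Real.exp_add]
        ring_nf
  rw [key T hT le_rfl, hVend]
  ring_nf
end

section
/- Let S and A be finite nonempty types, T ≥ 1 a horizon, g : S → A → S a deterministic transition function, and f : S → A → ℝ a reward function. Define V_{T+1}(s) = 0, Q_t(s,a) = f(s,a) + V_{t+1}(g(s,a)), V_t(s) = log ∑_{a∈A} exp(Q_t(s,a)), and the softmax policy π_t(a|s) = exp(Q_t(s,a) − V_t(s)). Fix an initial state s₁ ∈ S. Then the map sending an action sequence (a₁,…,a_T) ∈ A^T (with induced states s_{t+1} = g(s_t, a_t)) to ∏_{t=1}^T π_t(a_t|s_t) is a probability mass function on A^T, and it equals the maximum-entropy trajectory distribution: ∏_{t=1}^T π_t(a_t|s_t) = exp(∑_{t=1}^T f(s_t,a_t)) / ∑_{(a'₁,…,a'_T)∈A^T}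 exp(∑_{t=1}^T f(s'_t,a'_t)), where the denominator sum is over all action sequences with their induced states s'_{t+1} = g(s'_t, a'_t) starting from s'₁ = s₁. -/
open BigOperators

/-- The state sequence induced from initial state `s₁` by deterministic
dynamics `g` and actions `a`, with 1-based time: `s 1 = s₁` and
`s (t+1) = g (s t) (a t)` for `t ≥ 1` (the value at time `0` is a dummy). -/
def stateSeq {S A : Type*} (g : S → A → S) (s₁ : S) (a : ℕ → A) : ℕ → S
  | 0 => s₁
  | 1 => s₁
  | (t + 2) => g (stateSeq g s₁ a (t + 1)) (a (t + 1))

/-- Extension of a finite action sequence `a₁, …, a_T` (1-based) to `ℕ → A`. -/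
noncomputable def actOf {A : Type*} [Nonempty A] {T : ℕ} (v : Fin T → A) : ℕ → A :=
  fun t => if h : t - 1 < T then v ⟨t - 1, h⟩ else Classical.arbitrary A

/-- Soft value function computed by backward recursion, indexed by number of
remaining steps. -/
noncomputable def Wfun {S A : Type*} [Fintype A] (g : S → A → S) (f : S → A → ℝ) :
    ℕ → S → ℝ
  | 0, _ => 0
  | (k + 1), s => Real.log (∑ a, Real.exp (f s a + Wfun g f k (g s a)))

/-- Total reward of an action sequence of length `k` starting from `s`. -/
def Pfun {S A : Type*} (g : S → A → S) (f : S → A → ℝ) :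
    (k : ℕ) → S → (Fin k → A) → ℝ
  | 0, _, _ => 0
  | (k + 1), s, v => f s (v 0) + Pfun g f k (g s (v 0)) (v ∘ Fin.succ)

lemma sum_exp_Pfun {S A : Type*} [Fintype A] [Nonempty A] (g : S → A → S) (f : S → A → ℝ) :
    ∀ (k : ℕ) (s : S), ∑ v : Fin k → A, Real.exp (Pfun g f k s v) = Real.exp (Wfun g f k s) := by
  intro k
  induction k with
  | zero => intro s; simp [Pfun, Wfun]
  | succ k ih =>
    intro s
    rw [← Equiv.sum_comp (Fin.consEquiv (fun _ : Fin (k + 1) => A))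
      (fun v : Fin (k + 1) → A => Real.exp (Pfun g f (k + 1) s v))]
    have hsplit : ∀ p : A × (Fin k → A),
        Pfun g f (k + 1) s ((Fin.consEquiv (fun _ : Fin (k + 1) => A)) p)
          = f s p.1 + Pfun g f k (g s p.1) p.2 := by
      rintro ⟨a, w⟩
      show Pfun g f (k + 1) s (Fin.cons a w) = f s a + Pfun g f k (g s a) w
      have h0 : (Fin.cons a w : Fin (k + 1) → A) 0 = a := rfl
      have h1 : (Fin.cons a w : Fin (k + 1) → A) ∘ Fin.succ = w := by
        funext j; simp [Fin.cons_succ]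
      simp only [Pfun, h0, h1]
    simp only [hsplit]
    rw [Fintype.sum_prod_type]
    have hpos : (0 : ℝ) < ∑ a, Real.exp (f s a + Wfun g f k (g s a)) :=
      Finset.sum_pos (fun a _ => Real.exp_pos _) Finset.univ_nonempty
    have : Wfun g f (k + 1) s = Real.log (∑ a, Real.exp (f s a + Wfun g f k (g s a))) := rfl
    rw [this, Real.exp_log hpos]
    refine Finset.sum_congr rfl fun a _ => ?_
    rw [Real.exp_add, ← ih (g s a), Finset.mul_sum]
    refine Finset.sum_congr rfl fun w _ => ?_
    rw [← Real.exp_add]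

lemma stateSeq_shift {S A : Type*} (g : S → A → S) (s : S) (a : ℕ → A) :
    ∀ t, 1 ≤ t →
      stateSeq g s a (t + 1) = stateSeq g (g s (a 1)) (fun n => a (n + 1)) t := by
  intro t
  induction t with
  | zero => intro h; omega
  | succ t ih =>
    intro _
    cases t with
    | zero => simp [stateSeq]
    | succ u =>
      have : stateSeq g s a (u + 3) = g (stateSeq g s a (u + 2)) (a (u + 2)) := rfl
      rw [this, ih (by omega)]
      rfl

lemma sum_f_eq_Pfun {S A : Type*} (g : S → A → S) (f : S → A → ℝ) :
    ∀ (k : ℕ) (s : S) (a : ℕ → A),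
      ∑ i ∈ Finset.range k, f (stateSeq g s a (i + 1)) (a (i + 1))
        = Pfun g f k s (fun j : Fin k => a (j.1 + 1)) := by
  intro k
  induction k with
  | zero => intro s a; simp [Pfun]
  | succ k ih =>
    intro s a
    rw [Finset.sum_range_succ']
    have h0 : f (stateSeq g s a (0 + 1)) (a (0 + 1)) = f s (a 1) := rfl
    have hsh : ∀ i ∈ Finset.range k,
        f (stateSeq g s a (i + 1 + 1)) (a (i + 1 + 1))
          = f (stateSeq g (g s (a 1)) (fun n => a (n + 1)) (i + 1))
              ((fun n => a (n + 1)) (i + 1)) := by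
      intro i _
      rw [stateSeq_shift g s a (i + 1) (by omega)]
    rw [h0, Finset.sum_congr rfl hsh, ih (g s (a 1)) (fun n => a (n + 1)), add_comm]
    rfl

/-- Lemma 1 of the paper (deterministic dynamics, fixed initial state): the
trajectory distribution induced by the soft-optimal (softmax) policy
`π_t(a|s) = exp (Q_t(s,a) − V_t(s))` is a probability mass function over
action sequences, and it coincides with the maximum-entropy (Boltzmann)
trajectory distribution with energy `−∑_t f(s_t,a_t)`. -/
theorem softmax_policy_is_maxent_traj_distribution {S A : Type*}
    [Fintype S] [Fintype A] [Nonempty S] [Nonempty A]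
    (T : ℕ) (hT : 1 ≤ T) (g : S → A → S) (f : S → A → ℝ)
    (V : ℕ → S → ℝ) (Q : ℕ → S → A → ℝ) (π : ℕ → S → A → ℝ)
    (hVend : ∀ s, V (T + 1) s = 0)
    (hQ : ∀ t, 1 ≤ t → t ≤ T → ∀ s a, Q t s a = f s a + V (t + 1) (g s a))
    (hV : ∀ t, 1 ≤ t → t ≤ T → ∀ s, V t s = Real.log (∑ a, Real.exp (Q t s a)))
    (hπ : ∀ t, 1 ≤ t → t ≤ T → ∀ s a, π t s a = Real.exp (Q t s a - V t s))
    (s₁ : S) :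
    (∀ v : Fin T → A,
        0 ≤ ∏ t ∈ Finset.Icc 1 T,
          π t (stateSeq g s₁ (actOf v) t) (actOf v t)) ∧
    (∑ v : Fin T → A,
        ∏ t ∈ Finset.Icc 1 T,
          π t (stateSeq g s₁ (actOf v) t) (actOf v t)) = 1 ∧
    (∀ v : Fin T → A,
        ∏ t ∈ Finset.Icc 1 T,
          π t (stateSeq g s₁ (actOf v) t) (actOf v t)
          = Real.exp (∑ t ∈ Finset.Icc 1 T,
              f (stateSeq g s₁ (actOf v) t) (actOf v t))
            / ∑ v' : Fin T → A,
                Real.exp (∑ t ∈ Finset.Icc 1 T,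
                  f (stateSeq g s₁ (actOf v') t) (actOf v' t))) := by
  -- V equals the backward-recursion value Wfun
  have VW : ∀ d, d ≤ T → ∀ s, V (T + 1 - d) s = Wfun g f d s := by
    intro d
    induction d with
    | zero => intro _ s; simpa [Wfun] using hVend s
    | succ d ih =>
      intro hd s
      have h1 : T + 1 - (d + 1) = T - d := by omega
      have ht1 : 1 ≤ T - d := by omega
      have ht2 : T - d ≤ T := by omega
      have h2 : T - d + 1 = T + 1 - d := by omega
      rw [h1, hV _ ht1 ht2]
      show _ = Real.log (∑ a, Real.exp (f s a + Wfun g f d (g s a)))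
      congr 1
      refine Finset.sum_congr rfl fun a _ => ?_
      rw [hQ _ ht1 ht2, h2, ih (by omega) (g s a)]
  have V1W : ∀ s, V 1 s = Wfun g f T s := by
    intro s
    have := VW T le_rfl s
    rwa [show T + 1 - T = 1 by omega] at this
  -- reward sum along trajectory equals Pfun
  have sumf : ∀ v : Fin T → A,
      ∑ t ∈ Finset.Icc 1 T, f (stateSeq g s₁ (actOf v) t) (actOf v t)
        = Pfun g f T s₁ v := by
    intro v
    rw [← Finset.Ico_add_one_right_eq_Icc, Finset.sum_Ico_eq_sum_range,
      show T + 1 - 1 = T by omega]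
    have : ∀ i ∈ Finset.range T,
        f (stateSeq g s₁ (actOf v) (1 + i)) (actOf v (1 + i))
          = f (stateSeq g s₁ (actOf v) (i + 1)) (actOf v (i + 1)) := by
      intro i _; rw [Nat.add_comm 1 i]
    rw [Finset.sum_congr rfl this, sum_f_eq_Pfun g f T s₁ (actOf v)]
    congr 1
    funext j
    simp [actOf]
  -- key telescoping formula
  have key : ∀ v : Fin T → A,
      ∏ t ∈ Finset.Icc 1 T, π t (stateSeq g s₁ (actOf v) t) (actOf v t)
        = Real.exp ((∑ t ∈ Finset.Icc 1 T,
            f (stateSeq g s₁ (actOf v) t) (actOf v t)) - V 1 s₁) := by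
    intro v
    set a := actOf v with ha
    set σ := stateSeq g s₁ a with hσ
    have hstep : ∀ t, 1 ≤ t → σ (t + 1) = g (σ t) (a t) := by
      intro t ht
      cases t with
      | zero => omega
      | succ u => rfl
    have hfac : ∀ t ∈ Finset.Icc 1 T,
        π t (σ t) (a t)
          = Real.exp (f (σ t) (a t) + V (t + 1) (σ (t + 1)) - V t (σ t)) := by
      intro t ht
      rw [Finset.mem_Icc] at ht
      rw [hπ t ht.1 ht.2, hQ t ht.1 ht.2, hstep t ht.1]
    rw [Finset.prod_congr rfl hfac, ← Real.exp_sum]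
    congr 1
    have tel : ∑ t ∈ Finset.Icc 1 T, (V (t + 1) (σ (t + 1)) - V t (σ t)) = -V 1 s₁ := by
      rw [← Finset.Ico_add_one_right_eq_Icc, Finset.sum_Ico_eq_sum_range,
        show T + 1 - 1 = T by omega]
      have : ∀ i ∈ Finset.range T,
          (V (1 + i + 1) (σ (1 + i + 1)) - V (1 + i) (σ (1 + i)))
            = ((fun u => V (u + 1) (σ (u + 1))) (i + 1)
                - (fun u => V (u + 1) (σ (u + 1))) i) := by
        intro i _
        simp only []
        rw [Nat.add_comm 1 i]
      rw [Finset.sum_congr rfl this,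
        Finset.sum_range_sub (fun u => V (u + 1) (σ (u + 1)))]
      have hσ1 : σ 1 = s₁ := rfl
      rw [hVend, hσ1, zero_sub]
    calc ∑ t ∈ Finset.Icc 1 T, (f (σ t) (a t) + V (t + 1) (σ (t + 1)) - V t (σ t))
        = ∑ t ∈ Finset.Icc 1 T,
            (f (σ t) (a t) + (V (t + 1) (σ (t + 1)) - V t (σ t))) := by
          refine Finset.sum_congr rfl fun t _ => ?_; ring
      _ = (∑ t ∈ Finset.Icc 1 T, f (σ t) (a t))
            + ∑ t ∈ Finset.Icc 1 T, (V (t + 1) (σ (t + 1)) - V t (σ t)) :=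
          Finset.sum_add_distrib
      _ = (∑ t ∈ Finset.Icc 1 T, f (σ t) (a t)) - V 1 s₁ := by rw [tel]; ring
  -- the partition function
  have Zeq : (∑ v : Fin T → A,
      Real.exp (∑ t ∈ Finset.Icc 1 T,
        f (stateSeq g s₁ (actOf v) t) (actOf v t))) = Real.exp (V 1 s₁) := by
    have : ∀ v : Fin T → A,
        Real.exp (∑ t ∈ Finset.Icc 1 T, f (stateSeq g s₁ (actOf v) t) (actOf v t))
          = Real.exp (Pfun g f T s₁ v) := by
      intro v; rw [sumf v]
    rw [Finset.sum_congr rfl (fun v _ => this v), sum_exp_Pfun g f T s₁, V1W s₁]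
  refine ⟨fun v => ?_, ?_, fun v => ?_⟩
  · rw [key v]; exact (Real.exp_pos _).le
  · have : ∀ v : Fin T → A,
        ∏ t ∈ Finset.Icc 1 T, π t (stateSeq g s₁ (actOf v) t) (actOf v t)
          = Real.exp (∑ t ∈ Finset.Icc 1 T,
              f (stateSeq g s₁ (actOf v) t) (actOf v t)) / Real.exp (V 1 s₁) := by
      intro v; rw [key v, Real.exp_sub]
    rw [Finset.sum_congr rfl (fun v _ => this v), ← Finset.sum_div, Zeq,
      div_self (Real.exp_ne_zero _)]
  · rw [key v, Real.exp_sub, Zeq]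
end

section
/- Let S and A be finite nonempty types, T ≥ 1 a horizon, g : S → A → S a deterministic transition function, and f : S → A → ℝ a reward function. Define V_{T+1}(s) = 0, Q_t(s,a) = f(s,a) + V_{t+1}(g(s,a)), V_t(s) = log ∑_{a∈A} exp(Q_t(s,a)). Fix s₁ ∈ S. For any time-indexed policy μ = (μ_1, …, μ_T), where each μ_t(·|s) is a probability mass function on A for every s ∈ S, the entropy-regularized expected return J(μ) = ∑_{(a₁,…,a_T)∈A^T} ( ∏_{t=1}^T μ_t(a_t|s_t) ) · ( ∑_{t=1}^T ( f(s_t,a_t) − log μ_t(a_t|s_t) ) ) (with states s_{t+1} = g(s_t,a_t) and the convention 0·log 0 = 0) satisfies J(μ) ≤ V₁(s₁), and equality holds for the softmax policy μ_t(a|s) = exp(Q_t(s,a) − V_t(s)). -/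
open BigOperators

/-- The entropy-regularized expected return of a time-indexed policy `μ` in a
finite-horizon deterministic MDP with dynamics `g`, reward `f`, horizon `T`,
and initial state `s₁`:
`J(μ) = ∑_{a₁,…,a_T} (∏_t μ_t(a_t|s_t)) · (∑_t (f(s_t,a_t) − log μ_t(a_t|s_t)))`
(with the convention `0·log 0 = 0`). -/
noncomputable def entRegReturn {S A : Type*} [Fintype A] [Nonempty A]
    (g : S → A → S) (f : S → A → ℝ) (T : ℕ) (s₁ : S) (μ : ℕ → S → A → ℝ) : ℝ :=
  ∑ v : Fin T → A,
    (∏ t ∈ Finset.Icc 1 T,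
        μ t (stateSeq g s₁ (actOf v) t) (actOf v t)) *
      (∑ t ∈ Finset.Icc 1 T,
        (f (stateSeq g s₁ (actOf v) t) (actOf v t)
          - Real.log (μ t (stateSeq g s₁ (actOf v) t) (actOf v t))))

def pathN {S A : Type*} (g : S → A → S) (s : S) (a : ℕ → A) : ℕ → S
  | 0 => s
  | (k+1) => g (pathN g s a k) (a k)

lemma pathN_shift {S A : Type*} (g : S → A → S) (s : S) (a : ℕ → A) :
    ∀ k, pathN g s a (k+1) = pathN g (g s (a 0)) (fun j => a (j+1)) k := by
  intro k
  induction k with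
  | zero => rfl
  | succ k ih =>
    have h1 : pathN g s a (k+1+1) = g (pathN g s a (k+1)) (a (k+1)) := rfl
    rw [h1, ih]; rfl

lemma stateSeq_eq_pathN {S A : Type*} (g : S → A → S) (s₁ : S) (a : ℕ → A) :
    ∀ k, stateSeq g s₁ a (k+1) = pathN g s₁ (fun j => a (j+1)) k := by
  intro k
  induction k with
  | zero => rfl
  | succ k ih =>
    have h1 : stateSeq g s₁ a (k+1+1) = g (stateSeq g s₁ a (k+1)) (a (k+1)) := rfl
    rw [h1, ih]; rfl

noncomputable def extT {A : Type*} [Nonempty A] {T : ℕ} (v : Fin T → A) : ℕ → A :=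
  fun k => actOf v (k+1)

lemma extT_fin {A : Type*} [Nonempty A] {T : ℕ} (v : Fin T → A) (i : Fin T) :
    extT v (i : ℕ) = v i := by
  simp [extT, actOf, i.isLt]

lemma extT_cons_zero {A : Type*} [Nonempty A] {n : ℕ} (a : A) (w : Fin n → A) :
    extT (Fin.cons a w) 0 = a := by
  simp [extT, actOf]

lemma extT_cons_shift {A : Type*} [Nonempty A] {n : ℕ} (a : A) (w : Fin n → A) :
    (fun j => extT (Fin.cons a w) (j+1)) = extT w := by
  funext j
  simp only [extT, actOf, Nat.add_sub_cancel]
  by_cases h : j < n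
  · rw [dif_pos (by omega : j + 1 < n + 1), dif_pos h]
    have := Fin.cons_succ (α := fun _ : Fin (n+1) => A) a w ⟨j, h⟩
    exact this
  · rw [dif_neg (by omega), dif_neg h]

lemma sum_fin_cons {A : Type*} [Fintype A] {n : ℕ} (F : (Fin (n+1) → A) → ℝ) :
    ∑ v : Fin (n+1) → A, F v = ∑ a : A, ∑ w : Fin n → A, F (Fin.cons a w) := by
  rw [← (Fin.consEquiv (fun _ : Fin (n+1) => A)).sum_comp F, Fintype.sum_prod_type]
  rfl

noncomputable def J0 {S A : Type*} [Fintype A] (g : S → A → S) :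
    ℕ → (ℕ → S → A → ℝ) → (ℕ → S → A → ℝ) → S → ℝ
  | 0, _, _, _ => 0
  | (n+1), μ, r, s =>
      ∑ a, μ 0 s a * (r 0 s a + J0 g n (fun k => μ (k+1)) (fun k => r (k+1)) (g s a))

lemma sum_prod_one {S A : Type*} [Fintype A] [Nonempty A] (g : S → A → S) :
    ∀ (n : ℕ) (μ : ℕ → S → A → ℝ) (s : S),
      (∀ i, i < n → ∀ s', ∑ a, μ i s' a = 1) →
      ∑ v : Fin n → A, ∏ i : Fin n, μ i (pathN g s (extT v) i) (v i) = 1 := by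
  intro n
  induction n with
  | zero => intro μ s _; simp
  | succ n ih =>
    intro μ s h
    rw [sum_fin_cons]
    have hterm : ∀ (a : A) (w : Fin n → A),
        (∏ i : Fin (n+1), μ i (pathN g s (extT (Fin.cons a w)) i) (Fin.cons (α := fun _ : Fin (n+1) => A) a w i))
          = μ 0 s a * ∏ i : Fin n,
              (fun k => μ (k+1)) i (pathN g (g s a) (extT w) i) (w i) := by
      intro a w
      rw [Fin.prod_univ_succ]
      congr 1
      · apply Finset.prod_congr rfl
        intro i _
        have hp : pathN g s (extT (Fin.cons a w)) ((Fin.succ i : Fin (n+1)) : ℕ)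
            = pathN g (g s a) (extT w) i := by
          rw [Fin.val_succ, pathN_shift, extT_cons_zero, extT_cons_shift]
        rw [hp, Fin.cons_succ, Fin.val_succ]
    calc (∑ a : A, ∑ w : Fin n → A,
            ∏ i : Fin (n+1), μ i (pathN g s (extT (Fin.cons a w)) i) (Fin.cons (α := fun _ : Fin (n+1) => A) a w i))
        = ∑ a : A, μ 0 s a * ∑ w : Fin n → A, ∏ i : Fin n,
              (fun k => μ (k+1)) i (pathN g (g s a) (extT w) i) (w i) := by
          apply Finset.sum_congr rfl; intro a _
          rw [Finset.mul_sum]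
          exact Finset.sum_congr rfl (fun w _ => hterm a w)
      _ = ∑ a : A, μ 0 s a * 1 := by
          apply Finset.sum_congr rfl; intro a _
          rw [ih (fun k => μ (k+1)) (g s a) (fun i hi s' => h (i+1) (by omega) s')]
      _ = 1 := by simpa using h 0 (by omega) s

lemma sum_eq_J0 {S A : Type*} [Fintype A] [Nonempty A] (g : S → A → S) :
    ∀ (n : ℕ) (μ r : ℕ → S → A → ℝ) (s : S),
      (∀ i, i < n → ∀ s', ∑ a, μ i s' a = 1) →
      ∑ v : Fin n → A,
        (∏ i : Fin n, μ i (pathN g s (extT v) i) (v i)) *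
          (∑ i : Fin n, r i (pathN g s (extT v) i) (v i)) = J0 g n μ r s := by
  intro n
  induction n with
  | zero => intro μ r s _; simp [J0]
  | succ n ih =>
    intro μ r s h
    rw [sum_fin_cons]
    have hstate : ∀ (a : A) (w : Fin n → A) (i : Fin n),
        pathN g s (extT (Fin.cons a w)) ((Fin.succ i : Fin (n+1)) : ℕ)
          = pathN g (g s a) (extT w) i := by
      intro a w i
      rw [Fin.val_succ, pathN_shift, extT_cons_zero, extT_cons_shift]
    have hterm : ∀ (a : A) (w : Fin n → A),
        (∏ i : Fin (n+1), μ i (pathN g s (extT (Fin.cons a w)) i) (Fin.cons (α := fun _ : Fin (n+1) => A) a w i)) *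
          (∑ i : Fin (n+1), r i (pathN g s (extT (Fin.cons a w)) i) (Fin.cons (α := fun _ : Fin (n+1) => A) a w i))
        = μ 0 s a *
            ((∏ i : Fin n, (fun k => μ (k+1)) i (pathN g (g s a) (extT w) i) (w i)) *
              (r 0 s a +
                ∑ i : Fin n, (fun k => r (k+1)) i (pathN g (g s a) (extT w) i) (w i))) := by
      intro a w
      rw [Fin.prod_univ_succ, Fin.sum_univ_succ]
      rw [show Fin.cons (α := fun _ : Fin (n+1) => A) a w 0 = a from rfl]
      have hP : (∏ i : Fin n,
          μ (Fin.succ i : Fin (n+1)) (pathN g s (extT (Fin.cons a w)) (Fin.succ i : Fin (n+1)))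
            (Fin.cons (α := fun _ : Fin (n+1) => A) a w (Fin.succ i)))
          = ∏ i : Fin n, (fun k => μ (k+1)) i (pathN g (g s a) (extT w) i) (w i) := by
        apply Finset.prod_congr rfl; intro i _
        rw [hstate a w i, Fin.cons_succ, Fin.val_succ]
      have hR : (∑ i : Fin n,
          r (Fin.succ i : Fin (n+1)) (pathN g s (extT (Fin.cons a w)) (Fin.succ i : Fin (n+1)))
            (Fin.cons (α := fun _ : Fin (n+1) => A) a w (Fin.succ i)))
          = ∑ i : Fin n, (fun k => r (k+1)) i (pathN g (g s a) (extT w) i) (w i) := by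
        apply Finset.sum_congr rfl; intro i _
        rw [hstate a w i, Fin.cons_succ, Fin.val_succ]
      rw [hP, hR]
      have h0s : pathN g s (extT (Fin.cons a w)) ((0 : Fin (n+1)) : ℕ) = s := rfl
      rw [h0s]
      simp only [Fin.val_zero]
      ring
    have hμshift : ∀ i, i < n → ∀ s', ∑ a, (fun k => μ (k+1)) i s' a = 1 :=
      fun i hi s' => h (i+1) (by omega) s'
    calc (∑ a : A, ∑ w : Fin n → A,
            (∏ i : Fin (n+1), μ i (pathN g s (extT (Fin.cons a w)) i) (Fin.cons (α := fun _ : Fin (n+1) => A) a w i)) *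
            (∑ i : Fin (n+1), r i (pathN g s (extT (Fin.cons a w)) i) (Fin.cons (α := fun _ : Fin (n+1) => A) a w i)))
        = ∑ a : A, μ 0 s a * ∑ w : Fin n → A,
            (∏ i : Fin n, (fun k => μ (k+1)) i (pathN g (g s a) (extT w) i) (w i)) *
              (r 0 s a +
                ∑ i : Fin n, (fun k => r (k+1)) i (pathN g (g s a) (extT w) i) (w i)) := by
          apply Finset.sum_congr rfl; intro a _
          rw [Finset.mul_sum]
          exact Finset.sum_congr rfl (fun w _ => hterm a w)
      _ = ∑ a : A, μ 0 s a *
            (r 0 s a + J0 g n (fun k => μ (k+1)) (fun k => r (k+1)) (g s a)) := by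
          apply Finset.sum_congr rfl; intro a _
          congr 1
          have expand : ∀ w : Fin n → A,
              (∏ i : Fin n, (fun k => μ (k+1)) i (pathN g (g s a) (extT w) i) (w i)) *
                (r 0 s a +
                  ∑ i : Fin n, (fun k => r (k+1)) i (pathN g (g s a) (extT w) i) (w i))
              = r 0 s a *
                  (∏ i : Fin n, (fun k => μ (k+1)) i (pathN g (g s a) (extT w) i) (w i)) +
                (∏ i : Fin n, (fun k => μ (k+1)) i (pathN g (g s a) (extT w) i) (w i)) *
                  (∑ i : Fin n, (fun k => r (k+1)) i (pathN g (g s a) (extT w) i) (w i)) := by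
            intro w; ring
          rw [Finset.sum_congr rfl (fun w _ => expand w), Finset.sum_add_distrib,
            ← Finset.mul_sum, sum_prod_one g n (fun k => μ (k+1)) (g s a) hμshift,
            ih (fun k => μ (k+1)) (fun k => r (k+1)) (g s a) hμshift]
          ring
      _ = J0 g (n+1) μ r s := by rfl

lemma gibbs_ineq {A : Type*} [Fintype A] [Nonempty A] (p : A → ℝ) (Q : A → ℝ)
    (hp0 : ∀ a, 0 ≤ p a) (hp1 : ∑ a, p a = 1) :
    ∑ a, p a * (Q a - Real.log (p a)) ≤ Real.log (∑ a, Real.exp (Q a)) := by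
  set Z : ℝ := ∑ a, Real.exp (Q a) with hZdef
  have hZ : 0 < Z := Finset.sum_pos (fun a _ => Real.exp_pos _) Finset.univ_nonempty
  have key : ∀ a, p a * (Q a - Real.log (p a)) - p a * Real.log Z
      ≤ Real.exp (Q a - Real.log Z) - p a := by
    intro a
    rcases eq_or_lt_of_le (hp0 a) with h | h
    · rw [← h]
      simpa using (Real.exp_pos (Q a - Real.log Z)).le
    · have hlog : Q a - Real.log (p a) - Real.log Z
          = Real.log (Real.exp (Q a - Real.log Z) / p a) := by
        rw [Real.log_div (Real.exp_ne_zero _) (ne_of_gt h), Real.log_exp]; ring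
      have h1 : p a * (Q a - Real.log (p a)) - p a * Real.log Z
          = p a * Real.log (Real.exp (Q a - Real.log Z) / p a) := by
        rw [← hlog]; ring
      rw [h1]
      have h2 := Real.log_le_sub_one_of_pos (div_pos (Real.exp_pos (Q a - Real.log Z)) h)
      have h3 := mul_le_mul_of_nonneg_left h2 (le_of_lt h)
      calc p a * Real.log (Real.exp (Q a - Real.log Z) / p a)
          ≤ p a * (Real.exp (Q a - Real.log Z) / p a - 1) := h3
        _ = Real.exp (Q a - Real.log Z) - p a := by field_simp
  have hsum := Finset.sum_le_sum (fun a (_ : a ∈ Finset.univ) => key a)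
  have hexp : ∑ a, Real.exp (Q a - Real.log Z) = 1 := by
    have : ∀ a, Real.exp (Q a - Real.log Z) = Real.exp (Q a) / Z := by
      intro a; rw [Real.exp_sub, Real.exp_log hZ]
    rw [Finset.sum_congr rfl (fun a _ => this a), ← Finset.sum_div, ← hZdef,
      div_self (ne_of_gt hZ)]
  have hL : ∑ a, (p a * (Q a - Real.log (p a)) - p a * Real.log Z)
      = (∑ a, p a * (Q a - Real.log (p a))) - Real.log Z := by
    rw [Finset.sum_sub_distrib, ← Finset.sum_mul, hp1, one_mul]
  have hR : ∑ a, (Real.exp (Q a - Real.log Z) - p a) = 0 := by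
    rw [Finset.sum_sub_distrib, hexp, hp1]; ring
  rw [hL, hR] at hsum
  linarith
lemma J0_le_V {S A : Type*} [Fintype A] [Nonempty A]
    (T : ℕ) (g : S → A → S) (f : S → A → ℝ)
    (V : ℕ → S → ℝ) (Q : ℕ → S → A → ℝ)
    (hVend : ∀ s, V (T + 1) s = 0)
    (hQ : ∀ t, 1 ≤ t → t ≤ T → ∀ s a, Q t s a = f s a + V (t + 1) (g s a))
    (hV : ∀ t, 1 ≤ t → t ≤ T → ∀ s, V t s = Real.log (∑ a, Real.exp (Q t s a)))
    (μ : ℕ → S → A → ℝ)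
    (hμ : ∀ t, 1 ≤ t → t ≤ T → ∀ s, (∀ a, 0 ≤ μ t s a) ∧ (∑ a, μ t s a) = 1) :
    ∀ (n t : ℕ) (s : S), 1 ≤ t → t + n = T + 1 →
      J0 g n (fun k => μ (t+k)) (fun k s a => f s a - Real.log (μ (t+k) s a)) s ≤ V t s := by
  intro n
  induction n with
  | zero =>
    intro t s h1 h2
    have ht : t = T + 1 := by omega
    subst ht
    simp [J0, hVend]
  | succ n ih =>
    intro t s h1 h2
    have htT : t ≤ T := by omega
    have e1 : (fun k => (fun k => μ (t+k)) (k+1)) = (fun k => μ (t+1+k)) := by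
      funext k
      show μ (t+(k+1)) = μ (t+1+k)
      rw [show t+(k+1) = t+1+k from by omega]
    have e2 : (fun k => (fun k s a => f s a - Real.log (μ (t+k) s a)) (k+1))
        = (fun k s a => f s a - Real.log (μ (t+1+k) s a)) := by
      funext k s' a
      show f s' a - Real.log (μ (t+(k+1)) s' a) = f s' a - Real.log (μ (t+1+k) s' a)
      rw [show t+(k+1) = t+1+k from by omega]
    have hunfold : J0 g (n+1) (fun k => μ (t+k))
        (fun k s a => f s a - Real.log (μ (t+k) s a)) s
        = ∑ a, μ t s a * ((f s a - Real.log (μ t s a))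
            + J0 g n (fun k => μ (t+1+k))
                (fun k s a => f s a - Real.log (μ (t+1+k) s a)) (g s a)) := by
      rw [show J0 g (n+1) (fun k => μ (t+k))
          (fun k s a => f s a - Real.log (μ (t+k) s a)) s
          = ∑ a, μ (t+0) s a * ((f s a - Real.log (μ (t+0) s a))
              + J0 g n (fun k => (fun k => μ (t+k)) (k+1))
                  (fun k => (fun k s a => f s a - Real.log (μ (t+k) s a)) (k+1)) (g s a))
          from rfl, e1, e2]
      rfl
    rw [hunfold]
    have hIH : ∀ a : A, J0 g n (fun k => μ (t+1+k))
        (fun k s a => f s a - Real.log (μ (t+1+k) s a)) (g s a) ≤ V (t+1) (g s a) :=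
      fun a => ih (t+1) (g s a) (by omega) (by omega)
    calc ∑ a, μ t s a * ((f s a - Real.log (μ t s a))
            + J0 g n (fun k => μ (t+1+k))
                (fun k s a => f s a - Real.log (μ (t+1+k) s a)) (g s a))
        ≤ ∑ a, μ t s a * ((f s a - Real.log (μ t s a)) + V (t+1) (g s a)) := by
          apply Finset.sum_le_sum
          intro a _
          exact mul_le_mul_of_nonneg_left (add_le_add_right (hIH a) _)
            ((hμ t h1 htT s).1 a)
      _ = ∑ a, μ t s a * (Q t s a - Real.log (μ t s a)) := by
          apply Finset.sum_congr rfl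
          intro a _
          rw [hQ t h1 htT s a]; ring
      _ ≤ Real.log (∑ a, Real.exp (Q t s a)) :=
          gibbs_ineq (μ t s) (Q t s) (hμ t h1 htT s).1 (hμ t h1 htT s).2
      _ = V t s := (hV t h1 htT s).symm

lemma J0_eq_V {S A : Type*} [Fintype A] [Nonempty A]
    (T : ℕ) (g : S → A → S) (f : S → A → ℝ)
    (V : ℕ → S → ℝ) (Q : ℕ → S → A → ℝ)
    (hVend : ∀ s, V (T + 1) s = 0)
    (hQ : ∀ t, 1 ≤ t → t ≤ T → ∀ s a, Q t s a = f s a + V (t + 1) (g s a))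
    (hV : ∀ t, 1 ≤ t → t ≤ T → ∀ s, V t s = Real.log (∑ a, Real.exp (Q t s a))) :
    ∀ (n t : ℕ) (s : S), 1 ≤ t → t + n = T + 1 →
      J0 g n (fun k s a => Real.exp (Q (t+k) s a - V (t+k) s))
        (fun k s a => f s a - Real.log (Real.exp (Q (t+k) s a - V (t+k) s))) s = V t s := by
  intro n
  induction n with
  | zero =>
    intro t s h1 h2
    have ht : t = T + 1 := by omega
    subst ht
    simp [J0, hVend]
  | succ n ih =>
    intro t s h1 h2
    have htT : t ≤ T := by omega
    have e1 : (fun k => (fun k s a => Real.exp (Q (t+k) s a - V (t+k) s)) (k+1))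
        = (fun k s a => Real.exp (Q (t+1+k) s a - V (t+1+k) s)) := by
      funext k s' a
      show Real.exp (Q (t+(k+1)) s' a - V (t+(k+1)) s')
        = Real.exp (Q (t+1+k) s' a - V (t+1+k) s')
      rw [show t + (k+1) = t+1+k from by omega]
    have e2 : (fun k => (fun k s a =>
          f s a - Real.log (Real.exp (Q (t+k) s a - V (t+k) s))) (k+1))
        = (fun k s a => f s a - Real.log (Real.exp (Q (t+1+k) s a - V (t+1+k) s))) := by
      funext k s' a
      show f s' a - Real.log (Real.exp (Q (t+(k+1)) s' a - V (t+(k+1)) s'))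
        = f s' a - Real.log (Real.exp (Q (t+1+k) s' a - V (t+1+k) s'))
      rw [show t + (k+1) = t+1+k from by omega]
    have hunfold : J0 g (n+1) (fun k s a => Real.exp (Q (t+k) s a - V (t+k) s))
        (fun k s a => f s a - Real.log (Real.exp (Q (t+k) s a - V (t+k) s))) s
        = ∑ a, Real.exp (Q t s a - V t s) *
            ((f s a - Real.log (Real.exp (Q t s a - V t s)))
              + J0 g n (fun k s a => Real.exp (Q (t+1+k) s a - V (t+1+k) s))
                  (fun k s a => f s a - Real.log (Real.exp (Q (t+1+k) s a - V (t+1+k) s)))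
                  (g s a)) := by
      rw [show J0 g (n+1) (fun k s a => Real.exp (Q (t+k) s a - V (t+k) s))
          (fun k s a => f s a - Real.log (Real.exp (Q (t+k) s a - V (t+k) s))) s
          = ∑ a, Real.exp (Q (t+0) s a - V (t+0) s) *
              ((f s a - Real.log (Real.exp (Q (t+0) s a - V (t+0) s)))
                + J0 g n (fun k => (fun k s a => Real.exp (Q (t+k) s a - V (t+k) s)) (k+1))
                    (fun k => (fun k s a =>
                      f s a - Real.log (Real.exp (Q (t+k) s a - V (t+k) s))) (k+1)) (g s a))
          from rfl, e1, e2]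
      rfl
    rw [hunfold]
    have hZ : (0:ℝ) < ∑ a, Real.exp (Q t s a) :=
      Finset.sum_pos (fun a _ => Real.exp_pos _) Finset.univ_nonempty
    have hnorm : ∑ a, Real.exp (Q t s a - V t s) = 1 := by
      have : ∀ a : A, Real.exp (Q t s a - V t s)
          = Real.exp (Q t s a) / (∑ b, Real.exp (Q t s b)) := by
        intro a
        rw [Real.exp_sub, hV t h1 htT s, Real.exp_log hZ]
      rw [Finset.sum_congr rfl (fun a _ => this a), ← Finset.sum_div,
        div_self (ne_of_gt hZ)]
    have hterm : ∀ a : A, Real.exp (Q t s a - V t s) *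
        ((f s a - Real.log (Real.exp (Q t s a - V t s)))
          + J0 g n (fun k s a => Real.exp (Q (t+1+k) s a - V (t+1+k) s))
              (fun k s a => f s a - Real.log (Real.exp (Q (t+1+k) s a - V (t+1+k) s)))
              (g s a))
        = Real.exp (Q t s a - V t s) * V t s := by
      intro a
      rw [ih (t+1) (g s a) (by omega) (by omega), Real.log_exp, hQ t h1 htT s a]
      ring
    rw [Finset.sum_congr rfl (fun a _ => hterm a), ← Finset.sum_mul, hnorm, one_mul]

lemma entRegReturn_eq_J0 {S A : Type*} [Fintype A] [Nonempty A]
    (g : S → A → S) (f : S → A → ℝ) (T : ℕ) (s₁ : S) (μ : ℕ → S → A → ℝ)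
    (hnorm : ∀ t, 1 ≤ t → t ≤ T → ∀ s, ∑ a, μ t s a = 1) :
    entRegReturn g f T s₁ μ
      = J0 g T (fun k => μ (1+k)) (fun k s a => f s a - Real.log (μ (1+k) s a)) s₁ := by
  rw [← sum_eq_J0 g T _ _ s₁ (fun i hi s' => hnorm (1+i) (by omega) (by omega) s')]
  unfold entRegReturn
  apply Finset.sum_congr rfl
  intro v _
  have hstate : ∀ i : Fin T, stateSeq g s₁ (actOf v) (1+(i:ℕ)) = pathN g s₁ (extT v) i := by
    intro i
    rw [add_comm, stateSeq_eq_pathN]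
    rfl
  have hact : ∀ i : Fin T, actOf v (1+(i:ℕ)) = v i := by
    intro i
    rw [add_comm]
    exact extT_fin v i
  congr 1
  · rw [← Finset.Ico_add_one_right_eq_Icc, Finset.prod_Ico_eq_prod_range]
    simp only [Nat.add_sub_cancel]
    rw [← Fin.prod_univ_eq_prod_range
      (fun i => μ (1+i) (stateSeq g s₁ (actOf v) (1+i)) (actOf v (1+i))) T]
    apply Finset.prod_congr rfl
    intro i _
    rw [hstate i, hact i]
  · rw [← Finset.Ico_add_one_right_eq_Icc, Finset.sum_Ico_eq_sum_range]
    simp only [Nat.add_sub_cancel]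
    rw [← Fin.sum_univ_eq_sum_range
      (fun i => f (stateSeq g s₁ (actOf v) (1+i)) (actOf v (1+i))
        - Real.log (μ (1+i) (stateSeq g s₁ (actOf v) (1+i)) (actOf v (1+i)))) T]
    apply Finset.sum_congr rfl
    intro i _
    rw [hstate i, hact i]

/-- Soft-value optimality in a finite-horizon deterministic MDP: every
time-indexed policy `μ` has entropy-regularized expected return
`J(μ) ≤ V₁(s₁)`, and the softmax policy `μ_t(a|s) = exp (Q_t(s,a) − V_t(s))`
attains equality. -/
theorem entropy_regularized_value_optimality {S A : Type*}
    [Fintype S] [Fintype A] [Nonempty S] [Nonempty A]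
    (T : ℕ) (hT : 1 ≤ T) (g : S → A → S) (f : S → A → ℝ)
    (V : ℕ → S → ℝ) (Q : ℕ → S → A → ℝ)
    (hVend : ∀ s, V (T + 1) s = 0)
    (hQ : ∀ t, 1 ≤ t → t ≤ T → ∀ s a, Q t s a = f s a + V (t + 1) (g s a))
    (hV : ∀ t, 1 ≤ t → t ≤ T → ∀ s, V t s = Real.log (∑ a, Real.exp (Q t s a)))
    (s₁ : S) :
    (∀ μ : ℕ → S → A → ℝ,
      (∀ t, 1 ≤ t → t ≤ T → ∀ s, (∀ a, 0 ≤ μ t s a) ∧ (∑ a, μ t s a) = 1) →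
      entRegReturn g f T s₁ μ ≤ V 1 s₁) ∧
    entRegReturn g f T s₁ (fun t s a => Real.exp (Q t s a - V t s)) = V 1 s₁ := by
  constructor
  · intro μ hμ
    rw [entRegReturn_eq_J0 g f T s₁ μ (fun t h1 h2 s => (hμ t h1 h2 s).2)]
    exact J0_le_V T g f V Q hVend hQ hV μ hμ T 1 s₁ le_rfl (by omega)
  · have hnorm : ∀ t, 1 ≤ t → t ≤ T → ∀ s,
        ∑ a, Real.exp (Q t s a - V t s) = 1 := by
      intro t h1 h2 s
      have hZ : (0:ℝ) < ∑ a, Real.exp (Q t s a) :=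
        Finset.sum_pos (fun a _ => Real.exp_pos _) Finset.univ_nonempty
      have : ∀ a : A, Real.exp (Q t s a - V t s)
          = Real.exp (Q t s a) / (∑ b, Real.exp (Q t s b)) := by
        intro a
        rw [Real.exp_sub, hV t h1 h2 s, Real.exp_log hZ]
      rw [Finset.sum_congr rfl (fun a _ => this a), ← Finset.sum_div,
        div_self (ne_of_gt hZ)]
    rw [entRegReturn_eq_J0 g f T s₁ _ hnorm]
    exact J0_eq_V T g f V Q hVend hQ hV T 1 s₁ le_rfl (by omega)
end

section
/- Let X be a finite nonempty type, f : ℝ → X → ℝ such that for each x ∈ X the map θ ↦ f(θ, x) is differentiable, and g : X → ℝ an arbitrary function. Define Z(θ) = ∑_{x∈X} exp(f(θ, x)) and p_θ(x) = exp(f(θ, x)) / Z(θ). Then the map θ ↦ ∑_{x∈X} p_θ(x) · g(x) is differentiable, and its derivative at θ equals ∑_{x∈X} p_θ(x) · g(x) · ( (d/dθ f(θ, x)) − ∑_{y∈X} p_θ(y) · (d/dθ f(θ, y)) ). -/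
open BigOperators

lemma boltzmann_hasDerivAt {X : Type*} [Fintype X] [Nonempty X]
    (f : ℝ → X → ℝ) (hf : ∀ x, Differentiable ℝ (fun θ => f θ x)) (g : X → ℝ)
    (θ : ℝ) :
    HasDerivAt (fun θ' => ∑ x, (Real.exp (f θ' x) / ∑ y, Real.exp (f θ' y)) * g x)
      (∑ x, (Real.exp (f θ x) / ∑ y, Real.exp (f θ y)) * g x *
            (deriv (fun θ' => f θ' x) θ
              - ∑ y, (Real.exp (f θ y) / ∑ z, Real.exp (f θ z))
                  * deriv (fun θ' => f θ' y) θ)) θ := by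
  set Z : ℝ := ∑ y, Real.exp (f θ y) with hZ
  have hZpos : 0 < Z := Finset.sum_pos (fun y _ => Real.exp_pos _) Finset.univ_nonempty
  have hZne : Z ≠ 0 := ne_of_gt hZpos
  set f' : X → ℝ := fun x => deriv (fun θ' => f θ' x) θ with hf'
  have hE : ∀ x, HasDerivAt (fun θ' => Real.exp (f θ' x)) (Real.exp (f θ x) * f' x) θ := by
    intro x
    exact (Real.hasDerivAt_exp (f θ x)).comp θ ((hf x).differentiableAt).hasDerivAt
  set Z' : ℝ := ∑ y, Real.exp (f θ y) * f' y with hZ'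
  have hZd : HasDerivAt (fun θ' => ∑ y, Real.exp (f θ' y)) Z' θ := by
    exact HasDerivAt.fun_sum (fun y _ => hE y)
  have hterm : ∀ x, HasDerivAt (fun θ' => (Real.exp (f θ' x) / ∑ y, Real.exp (f θ' y)) * g x)
      (((Real.exp (f θ x) * f' x * Z - Real.exp (f θ x) * Z') / Z ^ 2) * g x) θ := by
    intro x
    exact ((hE x).div hZd hZne).mul_const (g x)
  have hsum := HasDerivAt.fun_sum (fun x (_ : x ∈ Finset.univ) => hterm x)
  refine HasDerivAt.congr_deriv hsum ?_
  apply Finset.sum_congr rfl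
  intro x _
  have hpe : ∑ y, (Real.exp (f θ y) / Z) * f' y = Z' / Z := by
    rw [hZ', Finset.sum_div]
    exact Finset.sum_congr rfl (fun y _ => by ring)
  rw [hpe]
  field_simp
  ring

/-- Gradient of an expectation under an energy-based model over a finite set
(Lemma 2 of the paper, finite-space version): the derivative of
`θ ↦ E_{p_θ}[g]` equals `E_{p_θ}[g · (∂f/∂θ − E_{p_θ}[∂f/∂θ])]`. -/
theorem deriv_expectation_boltzmann {X : Type*} [Fintype X] [Nonempty X]
    (f : ℝ → X → ℝ) (hf : ∀ x, Differentiable ℝ (fun θ => f θ x)) (g : X → ℝ) :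
    Differentiable ℝ
      (fun θ => ∑ x, (Real.exp (f θ x) / ∑ y, Real.exp (f θ y)) * g x) ∧
    ∀ θ : ℝ,
      deriv (fun θ' => ∑ x, (Real.exp (f θ' x) / ∑ y, Real.exp (f θ' y)) * g x) θ
        = ∑ x, (Real.exp (f θ x) / ∑ y, Real.exp (f θ y)) * g x *
            (deriv (fun θ' => f θ' x) θ
              - ∑ y, (Real.exp (f θ y) / ∑ z, Real.exp (f θ z))
                  * deriv (fun θ' => f θ' y) θ) := by
  constructor
  · intro θ
    exact (boltzmann_hasDerivAt f hf g θ).differentiableAt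
  · intro θ
    exact (boltzmann_hasDerivAt f hf g θ).deriv
end
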